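/- Let G be a σ-p-group, let ε ∈ {+1,−1}, and let a ∈ G be such that σ(a) is conjugate in G to a^ε. Then there exists b ∈ G^ε that is conjugate in G to a; moreover, any two elements of G^ε that are conjugate in G to a are conjugate to each other by an element of G⁺. -/

import Mathlib

/-- Let `G` be a `σ`-`p`-group, `ε ∈ {+1, −1}`, and `a ∈ G`
with `σ(a)` conjugate in `G` to `a^ε`. Then there exists `b ∈ G^ε` conjugate in
`G` to `a`; moreover any two elements of `G^ε` that are conjugate in `G` to `a`
are conjugate to each other by an element of `G⁺`. -/
theorem sigma_p_group_conj_to_part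
    {p : ℕ} (hp : p.Prime) (hodd : Odd p)
    {G : Type*} [Group G] [Finite G] (hG : IsPGroup p G)
    (σ : G ≃* G) (hσ : ∀ a, σ (σ a) = a)
    (ε : ℤ) (hε : ε = 1 ∨ ε = -1)
    (a : G) (ha : IsConj (σ a) (a ^ ε)) :
    (∃ b : G, σ b = b ^ ε ∧ IsConj a b) ∧
    ∀ b b' : G, σ b = b ^ ε → σ b' = b' ^ ε → IsConj a b → IsConj a b' →
      ∃ d : G, σ d = d ∧ d * b * d⁻¹ = b' := by
  have hε2 : ε * ε = 1 := by rcases hε with h | h <;> simp [h]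
  -- conjugation respects `zpow`
  have hconj_zpow : ∀ u v : G, IsConj u v → IsConj (u ^ ε) (v ^ ε) := by
    intro u v huv
    rw [isConj_iff] at huv ⊢
    obtain ⟨c, hc⟩ := huv
    exact ⟨c, by rw [← hc, conj_zpow]⟩
  have hconj_σ : ∀ u v : G, IsConj u v → IsConj (σ u) (σ v) := by
    intro u v huv
    rw [isConj_iff] at huv ⊢
    obtain ⟨c, hc⟩ := huv
    exact ⟨σ c, by rw [← hc]; simp [map_mul]⟩
  -- the twisted involution
  set τ : G → G := fun x => (σ x) ^ ε with hτdef
  have hτinv : Function.Involutive τ := by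
    intro x
    simp only [hτdef, map_zpow, hσ, ← zpow_mul, hε2, zpow_one]
  have hτconj : ∀ x : G, IsConj x a → IsConj (τ x) a := by
    intro x hx
    have h1 : IsConj (σ x) (a ^ ε) := (hconj_σ x a hx).trans ha
    have h2 : IsConj (τ x) ((a ^ ε) ^ ε) := hconj_zpow _ _ h1
    rwa [← zpow_mul, hε2, zpow_one] at h2
  constructor
  · -- existence, via fixed point of the 2-group generated by τ on the orbit
    set S : Set G := MulAction.orbit (ConjAct G) a with hSdef
    have hmemS : ∀ x : G, x ∈ S ↔ IsConj x a := fun x => ConjAct.mem_orbit_conjAct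
    have hτS : ∀ x : S, τ (x : G) ∈ S := fun x =>
      (hmemS _).2 (hτconj _ ((hmemS _).1 x.2))
    set τS : S → S := fun x => ⟨τ (x : G), hτS x⟩ with hτSdef
    have hτSinv : Function.Involutive τS := by
      intro x
      apply Subtype.ext
      exact hτinv (x : G)
    set π : Equiv.Perm S := hτSinv.toPerm with hπdef
    have hπ2 : π ^ 2 = 1 := by
      ext x
      simp only [hπdef, pow_succ, pow_zero, one_mul, Equiv.Perm.mul_apply,
        Function.Involutive.coe_toPerm, Equiv.Perm.one_apply]
      exact congrArg Subtype.val (hτSinv x)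
    set H : Subgroup (Equiv.Perm S) := Subgroup.zpowers π with hHdef
    have hH2 : IsPGroup 2 H := by
      intro g
      refine ⟨1, ?_⟩
      obtain ⟨n, hn⟩ := g.2
      have : ((g : Equiv.Perm S)) ^ (2 ^ 1 : ℕ) = 1 := by
        rw [← hn]
        simp only [pow_one]
        rw [← zpow_natCast, ← zpow_mul, mul_comm, zpow_mul]
        norm_num
        rw [hπ2, one_zpow]
      exact Subtype.ext (by push_cast; simpa using this)
    haveI : Fact (Nat.Prime 2) := ⟨Nat.prime_two⟩
    haveI : Fact p.Prime := ⟨hp⟩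
    -- odd cardinality
    have hcard : ∃ n : ℕ, Nat.card S = p ^ n :=
      (hG.of_equiv ConjAct.toConjAct).card_orbit a
    have hodds : Odd (Nat.card S) := by
      obtain ⟨n, hn⟩ := hcard
      rw [hn]
      exact hodd.pow
    have hnd : ¬ (2 ∣ Nat.card S) := by
      rw [Nat.odd_iff] at hodds
      omega
    obtain ⟨x, hx⟩ := hH2.nonempty_fixed_point_of_prime_not_dvd_card S hnd
    have hfix : π x = x := by
      have := hx (⟨π, Subgroup.mem_zpowers π⟩ : H)
      simpa [Equiv.Perm.smul_def] using this
    have hfix' : τ (x : G) = (x : G) := congrArg Subtype.val hfix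
    refine ⟨(x : G), ?_, ((hmemS _).1 x.2).symm⟩
    -- from (σ x)^ε = x deduce σ x = x^ε
    have := congrArg (· ^ ε) hfix'
    simpa only [hτdef, ← zpow_mul, hε2, zpow_one] using this
  · -- uniqueness
    intro b b' hb hb' hab hab'
    obtain ⟨g, hg⟩ := isConj_iff.1 (hab.symm.trans hab')
    set c : G := g⁻¹ * σ g with hcdef
    have hgc : σ g = g * c := by simp [hcdef]
    have hσc : σ c = c⁻¹ := by
      simp [hcdef, map_mul, hσ, mul_inv_rev]
    -- c commutes with b
    have key : σ g * b ^ ε * (σ g)⁻¹ = g * b ^ ε * g⁻¹ := by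
      have h1 : σ b' = σ g * b ^ ε * (σ g)⁻¹ := by
        rw [← hg]; simp [map_mul, hb]
      have h2 : b' ^ ε = g * b ^ ε * g⁻¹ := by rw [← hg, conj_zpow]
      rw [← h1, hb', h2]
    have hcommε : Commute c (b ^ ε) := by
      have : c * b ^ ε * c⁻¹ = b ^ ε := by
        have : g⁻¹ * (σ g * b ^ ε * (σ g)⁻¹) * g = g⁻¹ * (g * b ^ ε * g⁻¹) * g := by
          rw [key]
        simpa [hcdef, mul_assoc] using this
      have := congrArg (· * c) this
      exact (by simpa [mul_assoc] using this : c * b ^ ε = b ^ ε * c)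
    have hcomm : Commute c b := by
      have := hcommε.zpow_right ε
      rwa [← zpow_mul, hε2, zpow_one] at this
    -- order of c is odd
    obtain ⟨k, hk⟩ := hG c
    have hdvd : orderOf c ∣ p ^ k := orderOf_dvd_of_pow_eq_one hk
    have hoddn : Odd (orderOf c) := Odd.of_dvd_nat hodd.pow hdvd
    obtain ⟨m, hm⟩ := hoddn
    refine ⟨g * (c ^ m)⁻¹, ?_, ?_⟩
    · have hcn : c ^ (2 * m + 1) = 1 := by
        rw [← hm]; exact pow_orderOf_eq_one c
      have : σ (g * (c ^ m)⁻¹) = g * c ^ (m + 1) := by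
        rw [map_mul, map_inv, map_pow, hσc, hgc, inv_pow, inv_inv, mul_assoc, ← pow_succ']
      rw [this]
      have : c ^ (m + 1) * c ^ m = 1 := by
        rw [← pow_add]
        convert hcn using 2
        ring
      have hcc : c ^ (m + 1) = (c ^ m)⁻¹ := by
        rw [eq_inv_iff_mul_eq_one]
        exact this
      rw [hcc]
    · have hcb : (c ^ m)⁻¹ * b * c ^ m = b := by
        have := (hcomm.pow_left m).inv_left.eq
        calc (c ^ m)⁻¹ * b * c ^ m = b * (c ^ m)⁻¹ * c ^ m := by rw [this]
          _ = b := by simp [mul_assoc]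
      calc g * (c ^ m)⁻¹ * b * (g * (c ^ m)⁻¹)⁻¹
          = g * ((c ^ m)⁻¹ * b * c ^ m) * g⁻¹ := by
            simp [mul_inv_rev, mul_assoc]
        _ = g * b * g⁻¹ := by rw [hcb]
        _ = b' := hg
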